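/- Let R₁,…,R_m,R be i.i.d. real random variables with atomless common distribution, fix δ ∈ (0,1), and let p = ⌈(1-δ)(m+1)⌉, assuming p ≤ m. Let R_(p) denote the p-th smallest value among R₁,…,R_m. Then P(R > R_(p)) = ⌊δ(m+1)⌋/(m+1) ≤ δ. -/

import Mathlib

open MeasureTheory Finset ENNReal

/-- The `k`-th smallest value (0-based) among `f 0, …, f (m-1)`. -/
noncomputable def orderStat {m : ℕ} (f : Fin m → ℝ) (k : Fin m) : ℝ :=
  ((Multiset.map f Finset.univ.val).sort (· ≤ ·)).get ⟨k, by simp⟩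

lemma sorted_get_lt_iff : ∀ (l : List ℝ), l.Pairwise (· ≤ ·) → ∀ (i : Fin l.length) (r : ℝ),
    l.get i < r ↔ (i : ℕ) < l.countP (fun x => decide (x < r))
  | [], _, i, _ => i.elim0
  | a :: t, hl, i, r => by
    obtain ⟨ha, ht⟩ := List.pairwise_cons.mp hl
    rw [List.countP_cons]
    match i with
    | ⟨0, _⟩ =>
      simp only [List.get, Fin.val_zero]
      constructor
      · intro h
        simp [h]
      · intro h
        by_contra har
        have h0 : t.countP (fun x => decide (x < r)) = 0 := by
          rw [List.countP_eq_zero]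
          intro x hx
          simp only [decide_eq_true_eq]
          intro hxr
          exact har (lt_of_le_of_lt (ha x hx) hxr)
        simp [h0, har] at h
    | ⟨j + 1, hj⟩ =>
      have hj' : j < t.length := by simpa using hj
      have := sorted_get_lt_iff t ht ⟨j, hj'⟩ r
      simp only [List.get] at this ⊢
      rw [this]
      by_cases har : a < r
      · simp [har]
      · have h0 : t.countP (fun x => decide (x < r)) = 0 := by
          rw [List.countP_eq_zero]
          intro x hx
          simp only [decide_eq_true_eq]
          intro hxr
          exact har (lt_of_le_of_lt (ha x hx) hxr)
        simp [h0, har]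

lemma orderStat_lt_iff {m : ℕ} (f : Fin m → ℝ) (k : ℕ) (hk : k < m) (r : ℝ) :
    orderStat f ⟨k, hk⟩ < r ↔ k < (univ.filter (fun i => f i < r)).card := by
  unfold orderStat
  rw [sorted_get_lt_iff _ (Multiset.pairwise_sort _ _)]
  have h1 : ((Multiset.map f Finset.univ.val).sort (· ≤ ·)).countP (fun x => decide (x < r))
      = Multiset.countP (fun x => x < r) (Multiset.map f Finset.univ.val) := by
    rw [← Multiset.coe_countP, Multiset.sort_eq]
  rw [h1, Multiset.countP_map]
  simp only [Multiset.countP_eq_card_filter]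
  rfl

noncomputable def rankCount {n : ℕ} (ω : Fin n → ℝ) (j : Fin n) : ℕ :=
  (univ.filter (fun i => ω i < ω j)).card

lemma measurable_rankCount {n : ℕ} (j : Fin n) :
    Measurable (fun ω : Fin n → ℝ => rankCount ω j) := by
  unfold rankCount
  simp only [Finset.card_filter]
  exact Finset.measurable_sum _ (fun i _ => Measurable.ite
    (measurableSet_lt (measurable_pi_apply i) (measurable_pi_apply j))
    measurable_const measurable_const)

lemma rankCount_lt {n : ℕ} (ω : Fin n → ℝ) (j : Fin n) : rankCount ω j < n := by
  have h : (univ.filter (fun i => ω i < ω j)) ⊆ univ.erase j := by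
    intro i hi
    simp only [Finset.mem_filter] at hi
    refine Finset.mem_erase.mpr ⟨?_, Finset.mem_univ _⟩
    rintro rfl
    exact lt_irrefl _ hi.2
  calc rankCount ω j ≤ (univ.erase j).card := Finset.card_le_card h
    _ < n := by rw [Finset.card_erase_of_mem (Finset.mem_univ _), Finset.card_univ,
        Fintype.card_fin]; have := j.pos; omega

lemma rankCount_lt_rankCount {n : ℕ} {ω : Fin n → ℝ} {j j' : Fin n} (h : ω j < ω j') :
    rankCount ω j < rankCount ω j' := by
  apply Finset.card_lt_card
  constructor
  · intro i hi
    simp only [Finset.mem_filter] at hi ⊢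
    exact ⟨hi.1, lt_trans hi.2 h⟩
  · intro hsub
    have := hsub (Finset.mem_filter.mpr ⟨Finset.mem_univ j, h⟩)
    simp only [Finset.mem_filter] at this
    exact lt_irrefl _ this.2

lemma rankCount_injective {n : ℕ} {ω : Fin n → ℝ} (hω : Function.Injective ω) :
    Function.Injective (rankCount ω) := by
  intro j j' h
  by_contra hne
  rcases lt_trichotomy (ω j) (ω j') with hlt | heq | hgt
  · exact absurd h (Nat.ne_of_lt (rankCount_lt_rankCount hlt))
  · exact hne (hω heq)
  · exact absurd h.symm (Nat.ne_of_lt (rankCount_lt_rankCount hgt))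

lemma rankCount_surjective {n : ℕ} {ω : Fin n → ℝ} (hω : Function.Injective ω)
    {k : ℕ} (hk : k < n) : ∃ j, rankCount ω j = k := by
  have hinj : Function.Injective (fun j => (⟨rankCount ω j, rankCount_lt ω j⟩ : Fin n)) := by
    intro a b hab
    exact rankCount_injective hω (by simpa using congrArg Fin.val hab)
  have hsurj := Finite.surjective_of_injective hinj
  obtain ⟨j, hj⟩ := hsurj ⟨k, hk⟩
  exact ⟨j, by simpa using congrArg Fin.val hj⟩

lemma rankCount_comp {n : ℕ} (ω : Fin n → ℝ) (e : Equiv.Perm (Fin n)) (j : Fin n) :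
    rankCount (fun i => ω (e i)) j = rankCount ω (e j) := by
  unfold rankCount
  apply Finset.card_equiv e
  intro i
  simp

lemma pi_eval_singleton {n : ℕ} (μ : Measure ℝ) [IsProbabilityMeasure μ] [NullSingletonClass μ]
    (k₀ : Fin n) (x : ℝ) :
    Measure.pi (fun _ : Fin n => μ) {f | f k₀ = x} = 0 := by
  classical
  have hset : {f : Fin n → ℝ | f k₀ = x}
      = Set.pi Set.univ (fun k => if k = k₀ then ({x} : Set ℝ) else Set.univ) := by
    ext f
    simp only [Set.mem_setOf_eq, Set.mem_pi, Set.mem_univ, forall_true_left]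
    constructor
    · intro h k
      by_cases hk : k = k₀ <;> simp [hk, h]
    · intro h
      have := h k₀
      simpa using this
  rw [hset, Measure.pi_pi]
  apply Finset.prod_eq_zero (Finset.mem_univ k₀)
  simp

lemma measure_eq_coords_null {n : ℕ} (μ : Measure ℝ) [IsProbabilityMeasure μ] [NullSingletonClass μ]
    {i j : Fin (n + 1)} (hij : i ≠ j) :
    Measure.pi (fun _ : Fin (n + 1) => μ) {ω | ω i = ω j} = 0 := by
  obtain ⟨k₀, hk₀⟩ := Fin.exists_succAbove_eq hij
  set T := MeasurableEquiv.piFinSuccAbove (fun _ : Fin (n + 1) => ℝ) j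
  have hpres := measurePreserving_piFinSuccAbove (fun _ : Fin (n + 1) => μ) j
  have hSmeas : MeasurableSet {q : ℝ × (Fin n → ℝ) | q.2 k₀ = q.1} :=
    measurableSet_eq_fun (measurable_snd.eval) measurable_fst
  have hset : {ω : Fin (n + 1) → ℝ | ω i = ω j} = T ⁻¹' {q | q.2 k₀ = q.1} := by
    ext ω
    simp only [Set.mem_setOf_eq, Set.mem_preimage, T,
      MeasurableEquiv.piFinSuccAbove_apply, Fin.insertNthEquiv, Equiv.coe_fn_symm_mk, Fin.removeNth, hk₀]
  rw [hset, hpres.measure_preimage hSmeas.nullMeasurableSet]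
  rw [Measure.prod_apply hSmeas]
  have h0 : ∀ x : ℝ, (Measure.pi (fun _ : Fin n => μ)) (Prod.mk x ⁻¹' {q : ℝ × (Fin n → ℝ) | q.2 k₀ = q.1}) = 0 := by
    intro x
    have hpre : (Prod.mk x ⁻¹' {q : ℝ × (Fin n → ℝ) | q.2 k₀ = q.1}) = {f | f k₀ = x} := by
      ext f; simp [eq_comm]
    rw [hpre]
    exact pi_eval_singleton μ k₀ x
  simp only [Set.preimage_setOf_eq] at h0
  simp [h0]

lemma measure_rank_event {n : ℕ} (μ : Measure ℝ) [IsProbabilityMeasure μ] [NullSingletonClass μ]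
    {k : ℕ} (hk : k < n + 1) :
    Measure.pi (fun _ : Fin (n + 1) => μ) {ω | rankCount ω (Fin.last n) = k}
      = ((n : ℝ≥0∞) + 1)⁻¹ := by
  classical
  set ν := Measure.pi (fun _ : Fin (n + 1) => μ) with hν
  set A : Fin (n + 1) → Set (Fin (n + 1) → ℝ) := fun j => {ω | rankCount ω j = k} with hA
  have hAmeas : ∀ j, MeasurableSet (A j) := fun j =>
    (measurable_rankCount j) (measurableSet_singleton k)
  -- measure of each A j equals measure of A last
  have hswap : ∀ j, ν (A j) = ν (A (Fin.last n)) := by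
    intro j
    set e : Equiv.Perm (Fin (n + 1)) := Equiv.swap j (Fin.last n) with he
    set T := MeasurableEquiv.piCongrLeft (fun _ : Fin (n + 1) => ℝ) e with hT
    have hpres : MeasurePreserving T ν ν :=
      measurePreserving_piCongrLeft (fun _ : Fin (n + 1) => μ) e
    have hTapp : ∀ (g : Fin (n + 1) → ℝ), T g = fun i => g (e.symm i) := by
      intro g
      funext i
      rw [hT, MeasurableEquiv.coe_piCongrLeft]
      conv_lhs => rw [← Equiv.apply_symm_apply e i]
      rw [Equiv.piCongrLeft_apply_apply]
    have hpre : T ⁻¹' (A j) = A (e.symm j) := by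
      ext ω
      simp only [Set.mem_preimage, hA, Set.mem_setOf_eq, hTapp ω]
      rw [show (fun i => ω (e.symm i)) = (fun i => ω (e.symm i)) from rfl]
      rw [rankCount_comp ω e.symm j]
    have := hpres.measure_preimage (hAmeas j).nullMeasurableSet
    rw [hpre] at this
    have hej : e.symm j = Fin.last n := by
      rw [he, Equiv.symm_swap, Equiv.swap_apply_left]
    rw [hej] at this
    exact this.symm
  -- the injectivity set
  set D : Set (Fin (n + 1) → ℝ) := {ω | Function.Injective ω} with hD
  have hDeq : D = ⋂ (i) (j) (_ : i ≠ j), {ω : Fin (n + 1) → ℝ | ω i = ω j}ᶜ := by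
    ext ω
    simp only [hD, Set.mem_setOf_eq, Set.mem_iInter, Set.mem_compl_iff]
    constructor
    · intro h i j hij habs
      exact hij (h habs)
    · intro h a b hab
      by_contra hne
      exact h a b hne hab
  have hDmeas : MeasurableSet D := by
    rw [hDeq]
    exact MeasurableSet.iInter fun i => MeasurableSet.iInter fun j =>
      MeasurableSet.iInter fun _ =>
        (measurableSet_eq_fun (measurable_pi_apply i) (measurable_pi_apply j)).compl
  have hDc : ν Dᶜ = 0 := by
    have : Dᶜ ⊆ ⋃ (i) (j) (_ : i ≠ j), {ω : Fin (n + 1) → ℝ | ω i = ω j} := by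
      rw [hDeq]
      simp only [Set.compl_iInter, compl_compl]
      exact subset_rfl
    exact measure_mono_null this (measure_iUnion_null fun i => measure_iUnion_null fun j =>
      measure_iUnion_null fun hij => measure_eq_coords_null μ hij)
  have hD1 : ν D = 1 := by
    exact (prob_compl_eq_zero_iff (μ := ν) hDmeas).mp hDc
  -- A j ∩ D are pairwise disjoint and cover D
  have hcover : (⋃ j, A j ∩ D) = D := by
    ext ω
    simp only [Set.mem_iUnion, Set.mem_inter_iff, hA, Set.mem_setOf_eq]
    constructor
    · rintro ⟨j, _, hωD⟩
      exact hωD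
    · intro hωD
      obtain ⟨j, hj⟩ := rankCount_surjective hωD hk
      exact ⟨j, hj, hωD⟩
  have hdisj : Pairwise (Function.onFun Disjoint fun j => A j ∩ D) := by
    intro j j' hjj'
    rw [Function.onFun, Set.disjoint_left]
    rintro ω ⟨hj, hωD⟩ ⟨hj', _⟩
    simp only [hA, Set.mem_setOf_eq] at hj hj'
    exact hjj' (rankCount_injective hωD (hj.trans hj'.symm))
  have hsum : ∑ j : Fin (n + 1), ν (A j ∩ D) = 1 := by
    rw [← tsum_fintype (L := SummationFilter.unconditional _), ← measure_iUnion hdisj (fun j => (hAmeas j).inter hDmeas), hcover, hD1]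
  have hAD : ∀ j, ν (A j ∩ D) = ν (A j) := by
    intro j
    have h1 := measure_inter_add_diff (μ := ν) (A j) hDmeas
    have h2 : ν (A j \ D) = 0 :=
      measure_mono_null (Set.diff_subset_compl _ _) hDc
    rw [h2, add_zero] at h1
    exact h1
  have hsum2 : ((n : ℝ≥0∞) + 1) * ν (A (Fin.last n)) = 1 := by
    calc ((n : ℝ≥0∞) + 1) * ν (A (Fin.last n))
        = ∑ _j : Fin (n + 1), ν (A (Fin.last n)) := by
          rw [Finset.sum_const, Finset.card_univ, Fintype.card_fin, nsmul_eq_mul]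
          push_cast
          ring
      _ = ∑ j : Fin (n + 1), ν (A j ∩ D) := by
          refine Finset.sum_congr rfl fun j _ => ?_
          rw [hAD j, hswap j]
      _ = 1 := hsum
  have hne0 : ((n : ℝ≥0∞) + 1) ≠ 0 := by simp
  have hnetop : ((n : ℝ≥0∞) + 1) ≠ ⊤ := by
    simp [ENNReal.add_ne_top]
  show ν (A (Fin.last n)) = ((n : ℝ≥0∞) + 1)⁻¹
  have hfin : ν (A (Fin.last n)) = ((n : ℝ≥0∞) + 1)⁻¹ * (((n : ℝ≥0∞) + 1) * ν (A (Fin.last n))) := by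
    rw [← mul_assoc, ENNReal.inv_mul_cancel hne0 hnetop, one_mul]
  rw [hfin, hsum2, mul_one]

lemma card_filter_castSucc {m : ℕ} (ω : Fin (m + 1) → ℝ) :
    (univ.filter (fun i : Fin m => ω i.castSucc < ω (Fin.last m))).card
      = rankCount ω (Fin.last m) := by
  unfold rankCount
  apply Finset.card_bij (fun i _ => i.castSucc)
  · intro i hi
    simp only [Finset.mem_filter] at hi ⊢
    exact ⟨Finset.mem_univ _, hi.2⟩
  · intro a ha b hb hab
    exact Fin.castSucc_injective m hab
  · intro j hj
    simp only [Finset.mem_filter] at hj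
    have hjne : j ≠ Fin.last m := by
      rintro rfl
      exact lt_irrefl _ hj.2
    obtain ⟨z, hz⟩ := Fin.exists_succAbove_eq hjne
    rw [Fin.succAbove_last] at hz
    refine ⟨z, ?_, hz⟩
    simp only [Finset.mem_filter]
    exact ⟨Finset.mem_univ _, by rw [hz]; exact hj.2⟩

/-- Let `R₁,…,R_m,R` be i.i.d. with atomless distribution, `δ ∈ (0,1)`,
`p = ⌈(1-δ)(m+1)⌉ ≤ m`.  Then `P(R > R_(p)) = ⌊δ(m+1)⌋/(m+1) ≤ δ`,
where `R_(p)` is the `p`-th smallest of the first `m` samples. -/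
theorem stmt_6 (m : ℕ) (hm : 1 ≤ m) (μ : Measure ℝ) [IsProbabilityMeasure μ] [NullSingletonClass μ]
    (δ : ℝ) (hδ : δ ∈ Set.Ioo (0:ℝ) 1)
    (p : ℕ) (hp : p = ⌈(1 - δ) * ((m : ℝ) + 1)⌉₊) (hpm : p ≤ m) :
    Measure.pi (fun _ : Fin (m + 1) => μ)
        {ω | orderStat (fun i : Fin m => ω i.castSucc) ⟨p - 1, by omega⟩ < ω (Fin.last m)}
      = ENNReal.ofReal ((⌊δ * ((m : ℝ) + 1)⌋ : ℝ) / ((m : ℝ) + 1)) ∧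
    ENNReal.ofReal ((⌊δ * ((m : ℝ) + 1)⌋ : ℝ) / ((m : ℝ) + 1)) ≤ ENNReal.ofReal δ := by
  obtain ⟨hδ0, hδ1⟩ := hδ
  have hm1pos : (0:ℝ) < (m:ℝ) + 1 := by positivity
  have htpos : (0:ℝ) < (1 - δ) * ((m:ℝ) + 1) := by nlinarith
  have hp1 : 1 ≤ p := by
    rw [hp]
    exact Nat.ceil_pos.mpr htpos
  have hpm1 : p - 1 < m := by omega
  -- floor computation
  have hceil : (p : ℤ) = ⌈(1 - δ) * ((m:ℝ) + 1)⌉ := by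
    rw [hp]
    exact Int.natCast_ceil_eq_ceil htpos.le
  have hfloor : ⌊δ * ((m:ℝ) + 1)⌋ = (m : ℤ) + 1 - p := by
    have h1 : δ * ((m:ℝ) + 1) = -((1 - δ) * ((m:ℝ) + 1)) + (((m : ℤ) + 1 : ℤ) : ℝ) := by
      push_cast; ring
    rw [h1, Int.floor_add_intCast, Int.floor_neg, ← hceil]
    ring
  have hfloorR : (⌊δ * ((m:ℝ) + 1)⌋ : ℝ) = ((m + 1 - p : ℕ) : ℝ) := by
    rw [hfloor]
    push_cast [Nat.cast_sub (by omega : p ≤ m + 1)]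
    ring
  -- event rewrite
  have hEeq : {ω : Fin (m + 1) → ℝ |
        orderStat (fun i : Fin m => ω i.castSucc) ⟨p - 1, by omega⟩ < ω (Fin.last m)}
      = ⋃ k ∈ Finset.Icc p m, {ω : Fin (m + 1) → ℝ | rankCount ω (Fin.last m) = k} := by
    ext ω
    simp only [Set.mem_setOf_eq, Set.mem_iUnion, Finset.mem_Icc, exists_prop]
    rw [orderStat_lt_iff _ (p - 1) hpm1 (ω (Fin.last m)), card_filter_castSucc ω]
    constructor
    · intro h
      refine ⟨rankCount ω (Fin.last m), ⟨by omega, ?_⟩, rfl⟩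
      have := rankCount_lt ω (Fin.last m)
      omega
    · rintro ⟨k, ⟨hk1, hk2⟩, hk3⟩
      omega
  -- measure computation
  have hdisj : Set.PairwiseDisjoint (↑(Finset.Icc p m))
      (fun k => {ω : Fin (m + 1) → ℝ | rankCount ω (Fin.last m) = k}) := by
    intro k _ k' _ hkk'
    rw [Function.onFun, Set.disjoint_left]
    intro ω h1 h2
    exact hkk' (h1.symm.trans h2)
  have hmeasbi := measure_biUnion_finset (μ := Measure.pi (fun _ : Fin (m + 1) => μ)) hdisj
    (fun k _ => (measurable_rankCount (Fin.last m)) (measurableSet_singleton k))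
  have hEval : Measure.pi (fun _ : Fin (m + 1) => μ)
      {ω | orderStat (fun i : Fin m => ω i.castSucc) ⟨p - 1, by omega⟩ < ω (Fin.last m)}
      = ((m + 1 - p : ℕ) : ℝ≥0∞) * (((m : ℝ≥0∞)) + 1)⁻¹ := by
    rw [hEeq, hmeasbi]
    have heach : ∀ k ∈ Finset.Icc p m,
        Measure.pi (fun _ : Fin (m + 1) => μ) {ω | rankCount ω (Fin.last m) = k}
          = ((m : ℝ≥0∞) + 1)⁻¹ := by
      intro k hk
      rw [Finset.mem_Icc] at hk
      exact measure_rank_event μ (by omega)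
    rw [Finset.sum_congr rfl heach, Finset.sum_const, Nat.card_Icc, nsmul_eq_mul]
  have hRHS : ENNReal.ofReal ((⌊δ * ((m : ℝ) + 1)⌋ : ℝ) / ((m : ℝ) + 1))
      = ((m + 1 - p : ℕ) : ℝ≥0∞) * (((m : ℝ≥0∞)) + 1)⁻¹ := by
    rw [hfloorR, ENNReal.ofReal_div_of_pos hm1pos, ENNReal.ofReal_natCast]
    have : ENNReal.ofReal ((m : ℝ) + 1) = (m : ℝ≥0∞) + 1 := by
      rw [show ((m : ℝ) + 1) = ((m + 1 : ℕ) : ℝ) by push_cast; ring, ENNReal.ofReal_natCast]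
      push_cast
      ring
    rw [this, div_eq_mul_inv]
  constructor
  · rw [hEval, hRHS]
  · apply ENNReal.ofReal_le_ofReal
    rw [div_le_iff₀ hm1pos]
    exact Int.floor_le _
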